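/- Let M ≥ 12 be an integer and let G be a graph with an edge e = uv such that d_G(u) ≤ ⌊(M+2)/4⌋ and d_G(u) + d_G(v) ≤ M + 1. If G − e admits a (2,1)-total labelling with colors {0,1,...,M+2}, then so does G. -/
import Mathlib


open SimpleGraph Finset

/-- `cv`, `ce` form a `k`-(d,1)-total labelling of `G`: vertex colors and edge colors lie in
`{0,…,k}`, adjacent vertices get distinct colors, adjacent edges get distinct colors, and a
vertex's color differs by at least `d` from the color of each incident edge. -/
def IsDTotalLabelling {V : Type*} (G : SimpleGraph V) (d k : ℕ)
    (cv : V → ℕ) (ce : Sym2 V → ℕ) : Prop :=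
  (∀ v, cv v ≤ k) ∧
  (∀ e ∈ G.edgeSet, ce e ≤ k) ∧
  (∀ u v, G.Adj u v → cv u ≠ cv v) ∧
  (∀ e ∈ G.edgeSet, ∀ e' ∈ G.edgeSet, e ≠ e' → (∃ w, w ∈ e ∧ w ∈ e') → ce e ≠ ce e') ∧
  (∀ u, ∀ e ∈ G.edgeSet, u ∈ e → (d : ℤ) ≤ |(cv u : ℤ) - (ce e : ℤ)|)

/-- `G` admits a `k`-(d,1)-total labelling. -/
def HasDTotalLabelling {V : Type*} (G : SimpleGraph V) (d k : ℕ) : Prop :=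
  ∃ cv ce, IsDTotalLabelling G d k cv ce

/-- The (d,1)-total labelling number `λ_d^T(G)`. -/
noncomputable def lambdaT {V : Type*} (G : SimpleGraph V) (d : ℕ) : ℕ :=
  sInf {k | HasDTotalLabelling G d k}

theorem stmt5 {V : Type*} [Fintype V] (G : SimpleGraph V) [DecidableRel G.Adj]
    (M : ℕ) (hM : 12 ≤ M) (u v : V) (huv : G.Adj u v)
    (hdu : G.degree u ≤ (M + 2) / 4)
    (hdeg : G.degree u + G.degree v ≤ M + 1)
    (hH : HasDTotalLabelling (G.deleteEdges {s(u, v)}) 2 (M + 2)) :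
    HasDTotalLabelling G 2 (M + 2) := by
  classical
  obtain ⟨cv, ce, hcv, hce, hvv, hee, hve⟩ := hH
  have hne : u ≠ v := huv.ne
  have heuv : s(u, v) ∈ G.edgeSet := huv
  have hmemH : ∀ f, f ∈ (G.deleteEdges {s(u, v)}).edgeSet ↔ f ∈ G.edgeSet ∧ f ≠ s(u, v) := by
    intro f
    simp [SimpleGraph.edgeSet_deleteEdges]
  -- helper: avoiding three values near c gives distance ≥ 2
  have key : ∀ x c : ℕ, x ≠ c → x ≠ c + 1 → x ≠ c - 1 → (2 : ℤ) ≤ |(x : ℤ) - c| := by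
    intro x c h1 h2 h3
    rw [le_abs]
    omega
  have pick : ∀ F : Finset ℕ, F.card < M + 3 → ∃ x, x ∈ Finset.range (M + 3) ∧ x ∉ F := by
    intro F hF
    by_contra h
    push_neg at h
    have hsub : Finset.range (M + 3) ⊆ F := fun x hx => h x hx
    have := Finset.card_le_card hsub
    rw [Finset.card_range] at this
    omega
  have h3card : ∀ x y z : ℕ, ({x, y, z} : Finset ℕ).card ≤ 3 := by
    intro x y z
    refine (Finset.card_insert_le _ _).trans (Nat.succ_le_succ ?_)
    refine (Finset.card_insert_le _ _).trans ?_
    simp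
  -- incidence sets
  set Iu : Finset (Sym2 V) := {e ∈ G.edgeFinset | u ∈ e} with hIudef
  set Iv : Finset (Sym2 V) := {e ∈ G.edgeFinset | v ∈ e} with hIvdef
  have hIu : Iu.card = G.degree u := by
    rw [hIudef, ← SimpleGraph.incidenceFinset_eq_filter, card_incidenceFinset_eq_degree]
  have hIv : Iv.card = G.degree v := by
    rw [hIvdef, ← SimpleGraph.incidenceFinset_eq_filter, card_incidenceFinset_eq_degree]
  have huvIu : s(u, v) ∈ Iu := by
    simp [hIudef, SimpleGraph.mem_edgeFinset, heuv]
  have huvIv : s(u, v) ∈ Iv := by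
    simp [hIvdef, SimpleGraph.mem_edgeFinset, heuv]
  set Ju := Iu.erase s(u, v) with hJudef
  set Jv := Iv.erase s(u, v) with hJvdef
  have hJu : Ju.card = G.degree u - 1 := by rw [hJudef, Finset.card_erase_of_mem huvIu, hIu]
  have hJv : Jv.card = G.degree v - 1 := by rw [hJvdef, Finset.card_erase_of_mem huvIv, hIv]
  have hdup : 1 ≤ G.degree u := by
    rw [← hIu]; exact Finset.card_pos.mpr ⟨_, huvIu⟩
  have hdvp : 1 ≤ G.degree v := by
    rw [← hIv]; exact Finset.card_pos.mpr ⟨_, huvIv⟩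
  -- choose the color a for the edge s(u,v)
  set A : Finset ℕ := (Ju ∪ Jv).image ce ∪ {cv v, cv v + 1, cv v - 1} with hAdef
  have hAcard : A.card < M + 3 := by
    calc A.card ≤ ((Ju ∪ Jv).image ce).card + ({cv v, cv v + 1, cv v - 1} : Finset ℕ).card :=
          Finset.card_union_le _ _
      _ ≤ (Ju.card + Jv.card) + 3 := by
          gcongr
          · exact (Finset.card_image_le).trans (Finset.card_union_le _ _)
          · exact h3card _ _ _
      _ < M + 3 := by rw [hJu, hJv]; omega
  obtain ⟨a, haR, haA⟩ := pick A hAcard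
  have haR' : a ≤ M + 2 := by have := Finset.mem_range.mp haR; omega
  have haIm : ∀ f ∈ Ju ∪ Jv, ce f ≠ a := by
    intro f hf heq
    exact haA (hAdef ▸ Finset.mem_union_left _ (heq ▸ Finset.mem_image_of_mem ce hf))
  have hav : a ≠ cv v ∧ a ≠ cv v + 1 ∧ a ≠ cv v - 1 := by
    refine ⟨?_, ?_, ?_⟩ <;> intro heq <;> exact haA (by
      rw [hAdef]; exact Finset.mem_union_right _ (by simp [heq]))
  -- the new edge coloring
  set ce' : Sym2 V → ℕ := fun f => if f = s(u, v) then a else ce f with hce'def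
  have hce'uv : ce' s(u, v) = a := by simp [hce'def]
  have hce'ne : ∀ f, f ≠ s(u, v) → ce' f = ce f := by
    intro f hf; simp [hce'def, hf]
  -- choose the color b for the vertex u
  set B : Finset ℕ :=
      (G.neighborFinset u).image cv ∪ Iu.biUnion (fun f => {ce' f, ce' f + 1, ce' f - 1})
    with hBdef
  have hBcard : B.card < M + 3 := by
    calc B.card ≤ ((G.neighborFinset u).image cv).card
          + (Iu.biUnion (fun f => {ce' f, ce' f + 1, ce' f - 1})).card :=
          Finset.card_union_le _ _
      _ ≤ G.degree u + Iu.card * 3 := by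
          gcongr
          · exact (Finset.card_image_le).trans (by rw [SimpleGraph.card_neighborFinset_eq_degree])
          · exact Finset.card_biUnion_le_card_mul _ _ _ (fun f _ => h3card _ _ _)
      _ < M + 3 := by rw [hIu]; omega
  obtain ⟨b, hbR, hbB⟩ := pick B hBcard
  have hbR' : b ≤ M + 2 := by have := Finset.mem_range.mp hbR; omega
  have hbN : ∀ w, G.Adj u w → cv w ≠ b := by
    intro w hw heq
    exact hbB (by
      rw [hBdef]
      exact Finset.mem_union_left _
        (heq ▸ Finset.mem_image_of_mem cv ((SimpleGraph.mem_neighborFinset G u w).mpr hw)))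
  have hbI : ∀ f ∈ Iu, b ≠ ce' f ∧ b ≠ ce' f + 1 ∧ b ≠ ce' f - 1 := by
    intro f hf
    refine ⟨?_, ?_, ?_⟩ <;> intro heq <;> exact hbB (by
      rw [hBdef]
      exact Finset.mem_union_right _ (Finset.mem_biUnion.mpr ⟨f, hf, by simp [heq]⟩))
  -- the new vertex coloring
  set cv' : V → ℕ := fun w => if w = u then b else cv w with hcv'def
  have hcv'u : cv' u = b := by simp [hcv'def]
  have hcv'ne : ∀ w, w ≠ u → cv' w = cv w := by intro w hw; simp [hcv'def, hw]
  refine ⟨cv', ce', ?_, ?_, ?_, ?_, ?_⟩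
  · intro w
    by_cases hw : w = u
    · rw [hw, hcv'u]; exact hbR'
    · rw [hcv'ne w hw]; exact hcv w
  · intro f hf
    by_cases h : f = s(u, v)
    · rw [h, hce'uv]; exact haR'
    · rw [hce'ne f h]; exact hce f ((hmemH f).mpr ⟨hf, h⟩)
  · intro x y hxy
    by_cases hx : x = u
    · subst hx
      have hy : y ≠ x := hxy.ne'
      rw [hcv'u, hcv'ne y hy]
      exact fun heq => hbN y hxy heq.symm
    · by_cases hy : y = u
      · subst hy
        rw [hcv'u, hcv'ne x hx]
        exact hbN x hxy.symm
      · rw [hcv'ne x hx, hcv'ne y hy]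
        have hsne : s(x, y) ≠ s(u, v) := by
          intro h
          rcases Sym2.eq_iff.mp h with ⟨h1, _⟩ | ⟨_, h2⟩
          · exact hx h1
          · exact hy h2
        exact hvv x y (by
          rw [SimpleGraph.deleteEdges_adj]
          exact ⟨hxy, by simpa using hsne⟩)
  · -- adjacent edges get distinct colors
    have aux : ∀ g ∈ G.edgeSet, g ≠ s(u, v) → (∃ w, w ∈ s(u, v) ∧ w ∈ g) → ce g ≠ a := by
      intro g hg hgne ⟨w, hw1, hw2⟩
      apply haIm g
      rcases Sym2.mem_iff.mp hw1 with h | h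
      · exact Finset.mem_union_left _ (Finset.mem_erase.mpr ⟨hgne, by
          simp [hIudef, SimpleGraph.mem_edgeFinset, hg, h ▸ hw2]⟩)
      · exact Finset.mem_union_right _ (Finset.mem_erase.mpr ⟨hgne, by
          simp [hIvdef, SimpleGraph.mem_edgeFinset, hg, h ▸ hw2]⟩)
    intro f hf g hg hfg hshare
    by_cases h1 : f = s(u, v)
    · subst h1
      have h2 : g ≠ s(u, v) := fun h => hfg h.symm
      rw [hce'uv, hce'ne g h2]
      exact fun heq => aux g hg h2 hshare heq.symm
    · by_cases h2 : g = s(u, v)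
      · subst h2
        rw [hce'uv, hce'ne f h1]
        obtain ⟨w, hw1, hw2⟩ := hshare
        exact aux f hf h1 ⟨w, hw2, hw1⟩
      · rw [hce'ne f h1, hce'ne g h2]
        exact hee f ((hmemH f).mpr ⟨hf, h1⟩) g ((hmemH g).mpr ⟨hg, h2⟩) hfg hshare
  · -- incidence condition
    intro w f hf hwf
    by_cases hw : w = u
    · subst hw
      rw [hcv'u]
      have hfIu : f ∈ Iu := by simp [hIudef, SimpleGraph.mem_edgeFinset, hf, hwf]
      obtain ⟨k1, k2, k3⟩ := hbI f hfIu
      exact key b (ce' f) k1 k2 k3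
    · by_cases h1 : f = s(u, v)
      · subst h1
        have hwv : w = v := by
          rcases Sym2.mem_iff.mp hwf with h | h
          · exact absurd h hw
          · exact h
        subst hwv
        rw [hcv'ne w hw, hce'uv]
        have := key a (cv w) hav.1 hav.2.1 hav.2.2
        rw [abs_sub_comm] at this
        exact this
      · rw [hcv'ne w hw, hce'ne f h1]
        exact hve w f ((hmemH f).mpr ⟨hf, h1⟩) hwf
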